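/- Let x(t) = r(t)s(t) be a positive h-energy solution of the anisotropic Kepler problem defined for all t ∈ [t₀, ∞). Then r(t)/t → √(2h), ṙ(t) → √(2h), and İ(t)/(2t) → 2h as t → ∞. -/

import Mathlib

open Real Set Filter InnerProductSpace

lemma aux_mono {f f' : ℝ → ℝ} {a : ℝ} (hf : ∀ t ∈ Set.Ici a, HasDerivAt f (f' t) t)
    (h0 : ∀ t ∈ Set.Ici a, 0 ≤ f' t) : MonotoneOn f (Set.Ici a) := by
  apply monotoneOn_of_deriv_nonneg (convex_Ici a)
    (fun t ht => (hf t ht).continuousAt.continuousWithinAt)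
  · intro t ht
    rw [interior_Ici] at ht
    exact (hf t (Set.mem_Ici.2 (le_of_lt (Set.mem_Ioi.1 ht)))).differentiableAt.differentiableWithinAt
  · intro t ht
    rw [interior_Ici] at ht
    rw [(hf t (Set.mem_Ici.2 (le_of_lt (Set.mem_Ioi.1 ht)))).deriv]
    exact h0 t (Set.mem_Ici.2 (le_of_lt (Set.mem_Ioi.1 ht)))

lemma euler_id {d : ℕ} (α : ℝ) (U : EuclideanSpace ℝ (Fin d) → ℝ)
    (hUhom : ∀ y : EuclideanSpace ℝ (Fin d), y ≠ 0 →
      U y = ‖y‖ ^ (-α) * U (‖y‖⁻¹ • y))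
    (hUC2 : ContDiffOn ℝ 2 U {y : EuclideanSpace ℝ (Fin d) | y ≠ 0})
    (y : EuclideanSpace ℝ (Fin d)) (hy : y ≠ 0) :
    (inner ℝ (gradient U y) y : ℝ) = -α * U y := by
  have hopen : IsOpen {y : EuclideanSpace ℝ (Fin d) | y ≠ 0} := isOpen_ne
  have hdiff : DifferentiableAt ℝ U y :=
    (hUC2.contDiffAt (hopen.mem_nhds hy)).differentiableAt (by norm_num)
  have hyn : (0:ℝ) < ‖y‖ := norm_pos_iff.2 hy
  have hscale : ∀ s : ℝ, 0 < s → U (s • y) = s ^ (-α) * U y := by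
    intro s hs
    have hsy : s • y ≠ 0 := smul_ne_zero (ne_of_gt hs) hy
    have h1 : ‖s • y‖ = s * ‖y‖ := by
      rw [norm_smul, Real.norm_eq_abs, abs_of_pos hs]
    have h2 : (‖s • y‖)⁻¹ • (s • y) = (‖y‖)⁻¹ • y := by
      rw [h1, smul_smul, mul_inv]
      congr 1
      field_simp
    rw [hUhom (s • y) hsy, h2, h1, Real.mul_rpow hs.le hyn.le,
      hUhom y hy]
    ring
  have hD1 : HasDerivAt (fun s : ℝ => U (s • y)) (fderiv ℝ U y y) 1 := by
    have hsm : HasDerivAt (fun s : ℝ => s • y) y 1 := by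
      simpa using (hasDerivAt_id (1:ℝ)).smul_const y
    have hF : HasFDerivAt U (fderiv ℝ U y) ((1:ℝ) • y) := by
      rw [one_smul]; exact hdiff.hasFDerivAt
    have := hF.comp_hasDerivAt 1 hsm
    exact this
  have hD2 : HasDerivAt (fun s : ℝ => s ^ (-α) * U y) (-α * U y) 1 := by
    have := (Real.hasDerivAt_rpow_const (p := -α) (x := (1:ℝ)) (Or.inl one_ne_zero)).mul_const (U y)
    simpa using this
  have heq : (fun s : ℝ => U (s • y)) =ᶠ[nhds (1:ℝ)] fun s : ℝ => s ^ (-α) * U y := by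
    filter_upwards [eventually_gt_nhds (zero_lt_one)] with s hs using hscale s hs
  have hkey : fderiv ℝ U y y = -α * U y := by
    have h1' := hD1.congr_of_eventuallyEq heq.symm
    exact h1'.unique hD2
  rw [← hkey]
  have hgr : (toDual ℝ (EuclideanSpace ℝ (Fin d))) (gradient U y) = fderiv ℝ U y :=
    (toDual ℝ (EuclideanSpace ℝ (Fin d))).apply_symm_apply _
  rw [← toDual_apply_apply, hgr]

lemma lin_div_lin (a b c e : ℝ) (hc : 0 < c) :
    Tendsto (fun t : ℝ => (a*t + b)/(c*t + e)) atTop (nhds (a/c)) := by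
  have h1 : Tendsto (fun t : ℝ => (a + b/t)/(c + e/t)) atTop (nhds (a/c)) := by
    have hn : Tendsto (fun t : ℝ => a + b/t) atTop (nhds a) := by
      simpa using tendsto_const_nhds.add (Tendsto.div_atTop (tendsto_const_nhds (x := b)) tendsto_id)
    have hd : Tendsto (fun t : ℝ => c + e/t) atTop (nhds c) := by
      simpa using tendsto_const_nhds.add (Tendsto.div_atTop (tendsto_const_nhds (x := e)) tendsto_id)
    exact hn.div hd (ne_of_gt hc)
  apply h1.congr'
  filter_upwards [eventually_ge_atTop (1:ℝ), eventually_ge_atTop ((1+|e|)/c)] with t ht1 ht2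
  have ht0 : (0:ℝ) < t := lt_of_lt_of_le one_pos ht1
  have hce : 0 < c*t + e := by
    have : 1 + |e| ≤ t * c := (div_le_iff₀ hc).mp ht2
    have := neg_abs_le e
    linarith
  have hden : c + e/t ≠ 0 := by
    have : c + e / t = (c*t+e)/t := by field_simp
    rw [this]
    positivity
  rw [div_eq_div_iff hden (ne_of_gt hce)]
  field_simp

lemma quad_atTop {a : ℝ} (b c : ℝ) (ha : 0 < a) :
    Tendsto (fun t : ℝ => a*t^2 + b*t + c) atTop atTop := by
  have h1 : Tendsto (fun t : ℝ => t*(a*t+b) + c) atTop atTop := by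
    apply tendsto_atTop_add_const_right
    exact tendsto_id.atTop_mul_atTop₀
      (tendsto_atTop_add_const_right _ b (tendsto_id.const_mul_atTop ha))
  exact h1.congr (fun t => by ring)

theorem radial_asymptotics {d : ℕ} (hd : 2 ≤ d) (α h t₀ : ℝ)
    (hα : α ∈ Set.Ioo (0:ℝ) 2) (hh : 0 < h)
    (U : EuclideanSpace ℝ (Fin d) → ℝ)
    (hUhom : ∀ y : EuclideanSpace ℝ (Fin d), y ≠ 0 →
      U y = ‖y‖ ^ (-α) * U (‖y‖⁻¹ • y))
    (hUC2 : ContDiffOn ℝ 2 U {y : EuclideanSpace ℝ (Fin d) | y ≠ 0})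
    (hUpos : ∀ y : EuclideanSpace ℝ (Fin d), ‖y‖ = 1 → 0 < U y)
    (x x' : ℝ → EuclideanSpace ℝ (Fin d))
    (hx0 : ∀ t ∈ Set.Ici t₀, x t ≠ 0)
    (hx1 : ∀ t ∈ Set.Ici t₀, HasDerivAt x (x' t) t)
    (hx2 : ∀ t ∈ Set.Ici t₀, HasDerivAt x' (gradient U (x t)) t)
    (hE : ∀ t ∈ Set.Ici t₀, (1/2) * ‖x' t‖^2 - U (x t) = h) :
    Tendsto (fun t => ‖x t‖ / t) atTop (nhds (Real.sqrt (2*h))) ∧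
    Tendsto (fun t => deriv (fun u => ‖x u‖) t) atTop (nhds (Real.sqrt (2*h))) ∧
    Tendsto (fun t => deriv (fun u => ‖x u‖^2) t / (2*t)) atTop (nhds (2*h)) := by
  set L : ℝ := Real.sqrt (2*h) with hLdef
  have hL : 0 < L := Real.sqrt_pos.mpr (by linarith)
  have hLL : L * L = 2*h := Real.mul_self_sqrt (by linarith)
  set r : ℝ → ℝ := fun t => ‖x t‖ with hrdef
  set v : ℝ → ℝ := fun t => (inner ℝ (x t) (x' t) : ℝ) with hvdef
  have hr_pos : ∀ t ∈ Set.Ici t₀, 0 < r t := fun t ht => norm_pos_iff.2 (hx0 t ht)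
  -- positivity and upper bound of U along the orbit
  have hUx_pos : ∀ t ∈ Set.Ici t₀, 0 < U (x t) := by
    intro t ht
    have hrt := hr_pos t ht
    rw [hUhom (x t) (hx0 t ht)]
    have hunit : ‖(‖x t‖)⁻¹ • x t‖ = 1 := by
      rw [norm_smul, norm_inv, norm_norm, inv_mul_cancel₀ (ne_of_gt hrt)]
    have := hUpos _ hunit
    positivity
  -- maximum of U on the sphere
  obtain ⟨z, hzs, hzmax⟩ : ∃ z ∈ Metric.sphere (0 : EuclideanSpace ℝ (Fin d)) 1,
      ∀ w ∈ Metric.sphere (0 : EuclideanSpace ℝ (Fin d)) 1, U w ≤ U z := by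
    have hne : (Metric.sphere (0 : EuclideanSpace ℝ (Fin d)) 1).Nonempty := by
      refine ⟨EuclideanSpace.single (⟨0, by omega⟩ : Fin d) (1:ℝ), ?_⟩
      simp [mem_sphere_iff_norm, EuclideanSpace.norm_single]
    have hsub : Metric.sphere (0 : EuclideanSpace ℝ (Fin d)) 1 ⊆
        {y : EuclideanSpace ℝ (Fin d) | y ≠ 0} := by
      intro y hy
      have : ‖y‖ = 1 := by simpa using hy
      simp only [Set.mem_setOf_eq]
      intro h0
      rw [h0] at this; simp at this
    have hcont : ContinuousOn U (Metric.sphere (0 : EuclideanSpace ℝ (Fin d)) 1) :=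
      (hUC2.continuousOn).mono hsub
    obtain ⟨z, hz, hmax⟩ := (isCompact_sphere (0 : EuclideanSpace ℝ (Fin d)) 1).exists_isMaxOn
      hne hcont
    exact ⟨z, hz, fun w hw => hmax hw⟩
  set C : ℝ := U z with hCdef
  have hUx_le : ∀ t ∈ Set.Ici t₀, U (x t) ≤ C * (r t) ^ (-α) := by
    intro t ht
    have hrt := hr_pos t ht
    have hunit : ‖(‖x t‖)⁻¹ • x t‖ = 1 := by
      rw [norm_smul, norm_inv, norm_norm, inv_mul_cancel₀ (ne_of_gt hrt)]
    have hmem : (‖x t‖)⁻¹ • x t ∈ Metric.sphere (0 : EuclideanSpace ℝ (Fin d)) 1 := by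
      simpa [mem_sphere_iff_norm] using hunit
    have h1 := hzmax _ hmem
    rw [hUhom (x t) (hx0 t ht)]
    have hpow : (0:ℝ) < ‖x t‖ ^ (-α) := Real.rpow_pos_of_pos hrt _
    calc ‖x t‖ ^ (-α) * U ((‖x t‖)⁻¹ • x t) ≤ ‖x t‖ ^ (-α) * C := by
          exact mul_le_mul_of_nonneg_left h1 hpow.le
      _ = C * (r t) ^ (-α) := by rw [mul_comm]
  -- energy rearranged
  have hE2 : ∀ t ∈ Set.Ici t₀, ‖x' t‖^2 = 2*h + 2 * U (x t) := by
    intro t ht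
    have := hE t ht
    linarith
  -- derivative of v
  have hv' : ∀ t ∈ Set.Ici t₀, HasDerivAt v (2*h + (2-α) * U (x t)) t := by
    intro t ht
    have h1 : HasDerivAt v ((inner ℝ (x t) (gradient U (x t)) : ℝ) + (inner ℝ (x' t) (x' t) : ℝ)) t :=
      HasDerivAt.inner ℝ (hx1 t ht) (hx2 t ht)
    have h2 : (inner ℝ (x t) (gradient U (x t)) : ℝ) = -α * U (x t) := by
      rw [real_inner_comm]
      exact euler_id α U hUhom hUC2 (x t) (hx0 t ht)
    have h3 : (inner ℝ (x' t) (x' t) : ℝ) = ‖x' t‖^2 := real_inner_self_eq_norm_sq _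
    rw [h2, h3, hE2 t ht] at h1
    convert h1 using 1
    ring
  -- v grows at least linearly
  have hvlow : ∀ t ∈ Set.Ici t₀, v t₀ + 2*h*(t - t₀) ≤ v t := by
    intro t ht
    have hm : MonotoneOn (fun u => v u - 2*h*u) (Set.Ici t₀) := by
      apply aux_mono (f' := fun u => (2*h + (2-α) * U (x u)) - 2*h)
      · intro u hu
        exact (hv' u hu).sub (by simpa using (hasDerivAt_id u).const_mul (2*h))
      · intro u hu
        have := hUx_pos u hu
        have := hα.2
        nlinarith
    have := hm (Set.self_mem_Ici) ht ht
    simp only at this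
    linarith
  -- derivative of I = r²
  have hI' : ∀ t ∈ Set.Ici t₀, HasDerivAt (fun u => ‖x u‖^2) (2 * v t) t := by
    intro t ht
    have h1 : HasDerivAt (fun u => (inner ℝ (x u) (x u) : ℝ))
        ((inner ℝ (x t) (x' t) : ℝ) + (inner ℝ (x' t) (x t) : ℝ)) t :=
      HasDerivAt.inner ℝ (hx1 t ht) (hx1 t ht)
    have h2 : (fun u => (inner ℝ (x u) (x u) : ℝ)) = fun u => ‖x u‖^2 := by
      funext u; exact real_inner_self_eq_norm_sq _
    rw [h2] at h1
    have h4 : (inner ℝ (x t) (x' t) : ℝ) + (inner ℝ (x' t) (x t) : ℝ) = 2 * v t := by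
      simp only [hvdef]
      linarith [real_inner_comm (x' t) (x t)]
    rwa [h4] at h1
  -- I grows at least quadratically, hence r → ∞
  have hr_top : Tendsto r atTop atTop := by
    set b : ℝ := 2 * v t₀ - 4*h*t₀ with hbdef
    have hIlow : ∀ t ∈ Set.Ici t₀, 2*h*t^2 + b*t + (‖x t₀‖^2 - 2*h*t₀^2 - b*t₀) ≤ ‖x t‖^2 := by
      intro t ht
      have hm : MonotoneOn (fun u => ‖x u‖^2 - (2*h*u^2 + b*u)) (Set.Ici t₀) := by
        apply aux_mono (f' := fun u => 2 * v u - (2*h*(2*u) + b))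
        · intro u hu
          refine (hI' u hu).sub ?_
          have hq : HasDerivAt (fun u : ℝ => 2*h*u^2 + b*u) (2*h*(2*u) + b) u := by
            have := ((hasDerivAt_pow 2 u).const_mul (2*h)).add ((hasDerivAt_id u).const_mul b)
            exact this.congr_deriv (by norm_num [mul_comm])
          exact hq
        · intro u hu
          have := hvlow u hu
          simp only [hbdef] at *
          linarith
      have := hm (Set.self_mem_Ici) ht ht
      simp only at this
      linarith
    have hq_top : Tendsto (fun t => 2*h*t^2 + b*t + (‖x t₀‖^2 - 2*h*t₀^2 - b*t₀)) atTop atTop :=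
      quad_atTop _ _ (by linarith)
    have hI_top : Tendsto (fun t => ‖x t‖^2) atTop atTop := by
      apply tendsto_atTop_mono' _ _ hq_top
      filter_upwards [eventually_ge_atTop t₀] with t ht using hIlow t ht
    rw [tendsto_atTop]
    intro b'
    filter_upwards [hI_top.eventually_ge_atTop (b'^2)] with t ht
    calc b' ≤ |b'| := le_abs_self b'
      _ = Real.sqrt (b'^2) := (Real.sqrt_sq_eq_abs b').symm
      _ ≤ Real.sqrt (‖x t‖^2) := Real.sqrt_le_sqrt ht
      _ = r t := by rw [Real.sqrt_sq (norm_nonneg _)]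
  -- U(x t) → 0
  have hU0 : Tendsto (fun t => U (x t)) atTop (nhds 0) := by
    apply squeeze_zero'
    · filter_upwards [eventually_ge_atTop t₀] with t ht using (hUx_pos t ht).le
    · filter_upwards [eventually_ge_atTop t₀] with t ht using hUx_le t ht
    · have h1 : Tendsto (fun t => (r t) ^ (-α)) atTop (nhds 0) :=
        (tendsto_rpow_neg_atTop hα.1).comp hr_top
      simpa using h1.const_mul C
  -- ‖x'‖ → L
  have hx'lim : Tendsto (fun t => ‖x' t‖) atTop (nhds L) := by
    have h1 : Tendsto (fun t => Real.sqrt (2*h + 2 * U (x t))) atTop (nhds L) := by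
      have h2 : Tendsto (fun t => 2*h + 2 * U (x t)) atTop (nhds (2*h)) := by
        have := tendsto_const_nhds (x := 2*h) (f := atTop (α := ℝ)) |>.add (hU0.const_mul 2)
        simpa using this
      exact (Real.continuous_sqrt.tendsto (2*h)).comp h2
    apply h1.congr'
    filter_upwards [eventually_ge_atTop t₀] with t ht
    rw [← hE2 t ht, Real.sqrt_sq (norm_nonneg _)]
  -- derivative of r
  have hr' : ∀ t ∈ Set.Ici t₀, HasDerivAt r (v t / r t) t := by
    intro t ht
    have hne : ‖x t‖^2 ≠ 0 := by
      have h5 := hr_pos t ht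
      simp only [hrdef] at h5
      positivity
    have h1 := (hI' t ht).sqrt hne
    have h2 : (fun u => Real.sqrt (‖x u‖^2)) = r := by
      funext u; rw [Real.sqrt_sq (norm_nonneg _)]
    rw [h2] at h1
    have h3 : Real.sqrt (‖x t‖^2) = r t := by rw [Real.sqrt_sq (norm_nonneg _)]
    rw [h3] at h1
    convert h1 using 1
    exact (mul_div_mul_left _ _ two_ne_zero).symm
  -- |r'| ≤ ‖x'‖
  have hbound : ∀ t ∈ Set.Ici t₀, |v t / r t| ≤ ‖x' t‖ := by
    intro t ht
    have hrt := hr_pos t ht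
    rw [abs_div, abs_of_pos hrt, div_le_iff₀ hrt]
    calc |v t| ≤ ‖x t‖ * ‖x' t‖ := abs_real_inner_le_norm _ _
      _ = ‖x' t‖ * r t := by rw [mul_comm]
  -- P1 : v/r → L
  have P1 : Tendsto (fun t => v t / r t) atTop (nhds L) := by
    rw [tendsto_order]
    constructor
    · -- lower bound
      intro b hb
      -- choose M > L with b < 2h/M
      obtain ⟨M, hLM, hbM⟩ : ∃ M, L < M ∧ b < 2*h/M := by
        have hcont : ContinuousAt (fun u : ℝ => 2*h/u) L :=
          continuousAt_const.div continuousAt_id (ne_of_gt hL)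
        have hval : 2*h/L = L := by
          rw [div_eq_iff (ne_of_gt hL)]; linarith [hLL]
        have hbL : b < 2*h/L := by rw [hval]; exact hb
        have h1 : ∀ᶠ u in nhds L, b < 2*h/u := hcont.eventually_const_lt hbL
        have h2 := h1.filter_mono (nhdsWithin_le_nhds (s := Set.Ioi L))
        obtain ⟨M, hM1, hM2⟩ := (h2.and self_mem_nhdsWithin).exists
        exact ⟨M, hM2, hM1⟩
      obtain ⟨T, hT⟩ := eventually_atTop.1
        ((eventually_ge_atTop t₀).and (hx'lim.eventually_le_const hLM))
      have hT0 : t₀ ≤ T := (hT T le_rfl).1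
      -- r t ≤ r T + M (t - T) for t ≥ T
      have hrub : ∀ t ∈ Set.Ici T, r t ≤ r T + M*(t - T) := by
        intro t ht
        have hm : MonotoneOn (fun u => M*u - r u) (Set.Ici T) := by
          apply aux_mono (f' := fun u => M - v u / r u)
          · intro u hu
            have hM' : HasDerivAt (fun w : ℝ => M*w) M u := by
              simpa using (hasDerivAt_id u).const_mul M
            exact hM'.sub (hr' u (hT u hu).1)
          · intro u hu
            have h1 := hbound u (hT u hu).1
            have h2 := (hT u hu).2
            have := le_abs_self (v u / r u)
            linarith
        have := hm (Set.self_mem_Ici) ht ht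
        simp only at this
        linarith
      have hlim : Tendsto (fun t => (2*h*t + (v t₀ - 2*h*t₀)) / (M*t + (r T - M*T)))
          atTop (nhds (2*h/M)) := lin_div_lin _ _ _ _ (lt_trans hL hLM)
      have hnum_top : Tendsto (fun t => 2*h*t + (v t₀ - 2*h*t₀)) atTop atTop :=
        tendsto_atTop_add_const_right _ _ (tendsto_id.const_mul_atTop (by linarith))
      filter_upwards [eventually_ge_atTop T, hlim.eventually_const_lt hbM,
        hnum_top.eventually_ge_atTop 0] with t ht h2 h3
      have ht0 : t₀ ≤ t := (hT t ht).1
      have hrt := hr_pos t ht0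
      have hvt : v t₀ + 2*h*(t - t₀) ≤ v t := hvlow t ht0
      have hDpos : r t ≤ r T + M*(t - T) := hrub t ht
      calc b < (2*h*t + (v t₀ - 2*h*t₀)) / (M*t + (r T - M*T)) := h2
        _ ≤ v t / r t := by
            apply div_le_div₀ (by linarith) (by linarith) hrt (by linarith)
      -- done
    · -- upper bound
      intro b hb
      filter_upwards [eventually_ge_atTop t₀, hx'lim.eventually_lt_const hb] with t ht h2
      calc v t / r t ≤ |v t / r t| := le_abs_self _
        _ ≤ ‖x' t‖ := hbound t ht
        _ < b := h2
  -- P2 : r/t → L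
  have P2 : Tendsto (fun t => r t / t) atTop (nhds L) := by
    rw [tendsto_order]
    constructor
    · intro b hb
      set m := (b + L)/2 with hmdef
      have hm1 : b < m := by simp only [hmdef]; linarith
      have hm2 : m < L := by simp only [hmdef]; linarith
      obtain ⟨T, hT⟩ := eventually_atTop.1
        ((eventually_ge_atTop t₀).and (P1.eventually_const_le hm2))
      have hrlb : ∀ t ∈ Set.Ici T, r T + m*(t - T) ≤ r t := by
        intro t ht
        have hmon : MonotoneOn (fun u => r u - m*u) (Set.Ici T) := by
          apply aux_mono (f' := fun u => v u / r u - m)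
          · intro u hu
            exact (hr' u (hT u hu).1).sub (by simpa using (hasDerivAt_id u).const_mul m)
          · intro u hu
            have := (hT u hu).2
            linarith
        have := hmon (Set.self_mem_Ici) ht ht
        simp only at this
        linarith
      have hlim : Tendsto (fun t => (m*t + (r T - m*T)) / (1*t + 0)) atTop (nhds (m/1)) :=
        lin_div_lin _ _ _ _ one_pos
      simp only [one_mul, add_zero, div_one] at hlim
      filter_upwards [eventually_ge_atTop T, hlim.eventually_const_lt hm1,
        eventually_gt_atTop 0] with t ht h2 ht0
      calc b < (m*t + (r T - m*T)) / t := h2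
        _ ≤ r t / t := by
            have := hrlb t ht
            apply (div_le_div_iff_of_pos_right ht0).mpr
            linarith
    · intro b hb
      set M := (L + b)/2 with hMdef
      have hM1 : L < M := by simp only [hMdef]; linarith
      have hM2 : M < b := by simp only [hMdef]; linarith
      obtain ⟨T, hT⟩ := eventually_atTop.1
        ((eventually_ge_atTop t₀).and (P1.eventually_le_const hM1))
      have hrub : ∀ t ∈ Set.Ici T, r t ≤ r T + M*(t - T) := by
        intro t ht
        have hmon : MonotoneOn (fun u => M*u - r u) (Set.Ici T) := by
          apply aux_mono (f' := fun u => M - v u / r u)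
          · intro u hu
            have hM' : HasDerivAt (fun w : ℝ => M*w) M u := by
              simpa using (hasDerivAt_id u).const_mul M
            exact hM'.sub (hr' u (hT u hu).1)
          · intro u hu
            have := (hT u hu).2
            linarith
        have := hmon (Set.self_mem_Ici) ht ht
        simp only at this
        linarith
      have hlim : Tendsto (fun t => (M*t + (r T - M*T)) / (1*t + 0)) atTop (nhds (M/1)) :=
        lin_div_lin _ _ _ _ one_pos
      simp only [one_mul, add_zero, div_one] at hlim
      filter_upwards [eventually_ge_atTop T, hlim.eventually_lt_const hM2,
        eventually_gt_atTop 0] with t ht h2 ht0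
      calc r t / t ≤ (M*t + (r T - M*T)) / t := by
            have := hrub t ht
            apply (div_le_div_iff_of_pos_right ht0).mpr
            linarith
        _ < b := h2
  refine ⟨P2, ?_, ?_⟩
  · apply P1.congr'
    filter_upwards [eventually_ge_atTop t₀] with t ht
    exact ((hr' t ht).deriv).symm
  · have hprod : Tendsto (fun t => (v t / r t) * (r t / t)) atTop (nhds (2*h)) := by
      have := P1.mul P2
      rwa [hLL] at this
    apply hprod.congr'
    filter_upwards [eventually_ge_atTop t₀, eventually_gt_atTop 0] with t ht ht0
    have hrt := hr_pos t ht
    rw [(hI' t ht).deriv]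
    field_simp
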